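/- The embedded chain P of the GI/M/1 queue with parameter z > 1 is transient (i.e., its Green matrix G(i,j) = ∑_{k=0}^∞ P^k(i,j) is finite for all i,j) if and only if z > 2; equivalently, for 1 < z ≤ 2 the chain is recurrent. -/

import Mathlib

open scoped ENNReal
open Filter Topology

/-- Matrix powers of a nonnegative kernel on ℕ, values in `[0,∞]`. -/
noncomputable def matPow (P : ℕ → ℕ → ℝ≥0∞) : ℕ → ℕ → ℕ → ℝ≥0∞
  | 0, i, j => if i = j then 1 else 0
  | k + 1, i, j => ∑' l : ℕ, matPow P k i l * P l j

/-- The potential `φ(i) = ∑_{k=0}^∞ ∑_j P^k(i,j) c(j)`. -/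
noncomputable def potential (P : ℕ → ℕ → ℝ≥0∞) (c : ℕ → ℝ≥0∞) (i : ℕ) : ℝ≥0∞ :=
  ∑' k : ℕ, ∑' j : ℕ, matPow P k i j * c j

/-- The Green matrix `G(i,j) = ∑_{k=0}^∞ P^k(i,j)`. -/
noncomputable def green (P : ℕ → ℕ → ℝ≥0∞) (i j : ℕ) : ℝ≥0∞ :=
  ∑' k : ℕ, matPow P k i j

/-- `P_n^{(k-)} = ∑_{i=0}^k P(n,i)`. -/
noncomputable def Pminus (P : ℕ → ℕ → ℝ≥0∞) (n k : ℕ) : ℝ≥0∞ :=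
  ∑ l ∈ Finset.range (k + 1), P n l

/-- `F P i n = F_n^{(i)}`: `F_i^{(i)} = 1` and
`F_n^{(i)} = (1/P(n,n+1)) ∑_{k=i}^{n-1} P_n^{(k-)} F_k^{(i)}` for `i < n`. -/
noncomputable def F (P : ℕ → ℕ → ℝ≥0∞) (i : ℕ) : ℕ → ℝ≥0∞
  | n =>
    if n ≤ i then 1
    else (P n (n + 1))⁻¹ *
      ∑ k ∈ (Finset.Ico i n).attach, Pminus P n k.1 * F P i k.1
  termination_by n => n
  decreasing_by
    have h := Finset.mem_Ico.mp k.2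
    omega

/-- The embedded chain of the `GI/M/1` queue with parameter `z`:
`P(i,0) = b_i = 1/z^(i+1)`, `P(i,j) = a_{i+1-j} = (z-1)/z^(i+2-j)` for `1 ≤ j ≤ i+1`,
and `P(i,j) = 0` for `j > i+1`. -/
noncomputable def giM1 (z : ℝ) : ℕ → ℕ → ℝ≥0∞ := fun i j =>
  if j = 0 then ENNReal.ofReal (1 / z ^ (i + 1))
  else if j ≤ i + 1 then ENNReal.ofReal ((z - 1) / z ^ (i + 2 - j))
  else 0

lemma matPow_succ_left (P : ℕ → ℕ → ℝ≥0∞) (k i j : ℕ) :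
    matPow P (k+1) i j = ∑' l : ℕ, P i l * matPow P k l j := by
  induction k generalizing i j with
  | zero =>
    simp only [matPow]
    rw [tsum_eq_single i (fun l hl => by simp [if_neg (Ne.symm hl)]),
        tsum_eq_single j (fun l hl => by simp [if_neg hl])]
    simp
  | succ k ih =>
    show (∑' l : ℕ, matPow P (k+1) i l * P l j) = _
    calc (∑' l : ℕ, matPow P (k+1) i l * P l j)
        = ∑' l : ℕ, ∑' m : ℕ, (P i m * matPow P k m l) * P l j := by
          refine tsum_congr fun l => ?_
          rw [ih, ENNReal.tsum_mul_right]
      _ = ∑' m : ℕ, ∑' l : ℕ, (P i m * matPow P k m l) * P l j := ENNReal.tsum_comm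
      _ = ∑' m : ℕ, P i m * matPow P (k+1) m j := by
          refine tsum_congr fun m => ?_
          show _ = P i m * ∑' l, matPow P k m l * P l j
          rw [← ENNReal.tsum_mul_left]
          exact tsum_congr fun l => by ring

lemma giM1_eq_zero {z : ℝ} {i l : ℕ} (h : i + 1 < l) : giM1 z i l = 0 := by
  have h0 : l ≠ 0 := by omega
  have h1 : ¬ l ≤ i + 1 := by omega
  simp [giM1, h0, h1]

lemma giM1_tsum_eq (z : ℝ) (i : ℕ) (g : ℕ → ℝ≥0∞) :
    ∑' l : ℕ, giM1 z i l * g l = ∑ l ∈ Finset.range (i+2), giM1 z i l * g l := by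
  refine tsum_eq_sum fun l hl => ?_
  have h : i + 1 < l := by simp at hl; omega
  rw [giM1_eq_zero h, zero_mul]

lemma row_identity (z : ℝ) (hz : 1 < z) (i : ℕ) :
    1 / z ^ (i+1) + ∑ j ∈ Finset.Icc 1 (i+1), (z-1) / z ^ (i+2-j) * (1/(z-1))^j
      = (1/(z-1))^i - (z-2) / z^(i+1) := by
  have hz0 : z ≠ 0 := by linarith
  have hz0' : z ^ (i+2) ≠ 0 := pow_ne_zero _ hz0
  have hz1 : z - 1 ≠ 0 := by linarith
  have ht1 : z / (z-1) ≠ 1 := by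
    intro h
    rw [div_eq_one_iff_eq hz1] at h
    linarith
  have key : ∀ j ∈ Finset.Icc 1 (i+1),
      (z-1) / z ^ (i+2-j) * (1/(z-1))^j = (z-1) / z^(i+2) * (z/(z-1))^j := by
    intro j hj
    have hj' : j ≤ i + 2 := by have := (Finset.mem_Icc.mp hj).2; omega
    rw [pow_sub₀ z hz0 hj']
    rw [div_pow, div_pow, one_pow]
    field_simp
  rw [Finset.sum_congr rfl key, ← Finset.mul_sum]
  have hicc : Finset.Icc 1 (i+1) = Finset.Ico 1 (i+2) := by
    ext x; simp [Finset.mem_Icc, Finset.mem_Ico]; omega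
  have hgs : ∑ j ∈ Finset.Icc 1 (i+1), (z/(z-1))^j
      = ((z/(z-1))^(i+2) - 1) / (z/(z-1) - 1) - 1 := by
    rw [hicc, Finset.sum_Ico_eq_sub _ (by omega), geom_sum_eq ht1 (i+2)]
    simp
  rw [hgs]
  have hd : z/(z-1) - 1 = 1/(z-1) := by field_simp; ring
  rw [hd, div_pow]
  simp only [one_div, inv_pow, div_pow]
  field_simp
  ring

section Transient
variable {z : ℝ} (hz : 2 < z)

/-- Real values of the kernel. -/
noncomputable def Q (z : ℝ) : ℕ → ℕ → ℝ := fun i j =>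
  if j = 0 then 1 / z ^ (i + 1)
  else if j ≤ i + 1 then (z - 1) / z ^ (i + 2 - j)
  else 0

lemma giM1_eq_ofReal (z : ℝ) (i j : ℕ) : giM1 z i j = ENNReal.ofReal (Q z i j) := by
  unfold giM1 Q
  split_ifs <;> simp

lemma Q_nonneg {z : ℝ} (hz : 1 < z) (i j : ℕ) : 0 ≤ Q z i j := by
  have h0 : (0:ℝ) < z := by linarith
  unfold Q
  split_ifs
  · positivity
  · exact div_nonneg (by linarith) (by positivity)
  · exact le_refl 0


noncomputable def ff (z : ℝ) (i : ℕ) : ℝ≥0∞ := ENNReal.ofReal ((1/(z-1))^i)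
noncomputable def cc (z : ℝ) (i : ℕ) : ℝ≥0∞ := ENNReal.ofReal ((z-2) / z^(i+1))

lemma row_sum_real {z : ℝ} (hz : 1 < z) (i : ℕ) :
    ∑ j ∈ Finset.range (i+2), Q z i j * (1/(z-1))^j
      = (1/(z-1))^i - (z-2) / z^(i+1) := by
  rw [Finset.range_eq_Ico, Finset.sum_eq_sum_Ico_succ_bot (by omega)]
  have h0 : Q z i 0 * (1/(z-1))^0 = 1 / z^(i+1) := by simp [Q]
  have hicc : Finset.Ico 1 (i+2) = Finset.Icc 1 (i+1) := by
    ext x; simp [Finset.mem_Icc, Finset.mem_Ico]; omega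
  rw [h0, hicc, ← row_identity z hz i]
  congr 1
  refine Finset.sum_congr rfl fun j hj => ?_
  have hj' := Finset.mem_Icc.mp hj
  have : Q z i j = (z-1) / z ^ (i+2-j) := by
    unfold Q
    rw [if_neg (by omega), if_pos hj'.2]
  rw [this]

lemma row_sum_nonneg {z : ℝ} (hz : 1 < z) (i : ℕ) :
    0 ≤ (1/(z-1))^i - (z-2) / z^(i+1) := by
  rw [← row_sum_real hz i]
  refine Finset.sum_nonneg fun j _ => mul_nonneg (Q_nonneg hz i j)
    (pow_nonneg (div_nonneg zero_le_one (by linarith)) j)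

include hz in
lemma super_identity (i : ℕ) :
    cc z i + ∑' j : ℕ, giM1 z i j * ff z j = ff z i := by
  have hz1 : 1 < z := by linarith
  rw [giM1_tsum_eq]
  have : ∀ j ∈ Finset.range (i+2), giM1 z i j * ff z j
      = ENNReal.ofReal (Q z i j * (1/(z-1))^j) := by
    intro j _
    rw [giM1_eq_ofReal, ff, ← ENNReal.ofReal_mul (Q_nonneg hz1 i j)]
  rw [Finset.sum_congr rfl this, ← ENNReal.ofReal_sum_of_nonneg
      (fun j _ => mul_nonneg (Q_nonneg hz1 i j)
        (pow_nonneg (div_nonneg zero_le_one (by linarith)) j)),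
    row_sum_real hz1 i, cc, ← ENNReal.ofReal_add (div_nonneg (by linarith) (by positivity)) (row_sum_nonneg hz1 i), ff]
  ring_nf

include hz in
lemma partial_le : ∀ n i, ∑ k ∈ Finset.range n, (∑' j : ℕ, matPow (giM1 z) k i j * cc z j) ≤ ff z i := by
  intro n
  induction n with
  | zero => intro i; simp
  | succ n ih =>
    intro i
    rw [Finset.sum_range_succ']
    have h0 : (∑' j : ℕ, matPow (giM1 z) 0 i j * cc z j) = cc z i := by
      rw [show matPow (giM1 z) 0 = fun i j => if i = j then 1 else 0 from rfl]
      rw [tsum_eq_single i (fun l hl => by simp [if_neg (Ne.symm hl)])]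
      simp
    have hA : ∀ k, (∑' j : ℕ, matPow (giM1 z) (k+1) i j * cc z j)
        = ∑' l : ℕ, giM1 z i l * (∑' j : ℕ, matPow (giM1 z) k l j * cc z j) := by
      intro k
      calc (∑' j : ℕ, matPow (giM1 z) (k+1) i j * cc z j)
          = ∑' j : ℕ, ∑' l : ℕ, giM1 z i l * matPow (giM1 z) k l j * cc z j := by
            refine tsum_congr fun j => ?_
            rw [matPow_succ_left, ENNReal.tsum_mul_right]
        _ = ∑' l : ℕ, ∑' j : ℕ, giM1 z i l * matPow (giM1 z) k l j * cc z j :=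
            ENNReal.tsum_comm
        _ = _ := by
            refine tsum_congr fun l => ?_
            rw [← ENNReal.tsum_mul_left]
            exact tsum_congr fun j => by ring
    calc (∑ k ∈ Finset.range n, ∑' j : ℕ, matPow (giM1 z) (k+1) i j * cc z j)
          + (∑' j : ℕ, matPow (giM1 z) 0 i j * cc z j)
        = (∑ k ∈ Finset.range n, ∑' l : ℕ, giM1 z i l *
            (∑' j : ℕ, matPow (giM1 z) k l j * cc z j)) + cc z i := by
          rw [h0, Finset.sum_congr rfl fun k _ => hA k]
      _ = (∑' l : ℕ, ∑ k ∈ Finset.range n, giM1 z i l *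
            (∑' j : ℕ, matPow (giM1 z) k l j * cc z j)) + cc z i := by
          rw [Summable.tsum_finsetSum (fun _ _ => ENNReal.summable)]
      _ = (∑' l : ℕ, giM1 z i l *
            ∑ k ∈ Finset.range n, (∑' j : ℕ, matPow (giM1 z) k l j * cc z j)) + cc z i := by
          congr 1
          exact tsum_congr fun l => (Finset.mul_sum _ _ _).symm
      _ ≤ (∑' l : ℕ, giM1 z i l * ff z l) + cc z i := by
          gcongr with l
          exact ih l
      _ = ff z i := by rw [add_comm]; exact super_identity hz i

include hz in
lemma green_lt_top (i j : ℕ) : green (giM1 z) i j < ∞ := by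
  have hcj0 : cc z j ≠ 0 := by
    rw [cc, ne_eq, ENNReal.ofReal_eq_zero, not_le]
    exact div_pos (by linarith) (pow_pos (by linarith) _)
  have hcjt : cc z j ≠ ∞ := ENNReal.ofReal_ne_top
  have hft : ff z i ≠ ∞ := ENNReal.ofReal_ne_top
  have hle : green (giM1 z) i j * cc z j ≤ ff z i := by
    have h1 : green (giM1 z) i j * cc z j = ∑' k : ℕ, matPow (giM1 z) k i j * cc z j := by
      rw [green, ENNReal.tsum_mul_right]
    rw [h1]
    have h2 : ∀ k, matPow (giM1 z) k i j * cc z j ≤ ∑' j' : ℕ, matPow (giM1 z) k i j' * cc z j' :=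
      fun k => ENNReal.le_tsum j
    calc (∑' k : ℕ, matPow (giM1 z) k i j * cc z j)
        ≤ ∑' k : ℕ, ∑' j' : ℕ, matPow (giM1 z) k i j' * cc z j' := Summable.tsum_le_tsum h2 ENNReal.summable ENNReal.summable
      _ = ⨆ n, ∑ k ∈ Finset.range n, ∑' j' : ℕ, matPow (giM1 z) k i j' * cc z j' :=
          ENNReal.tsum_eq_iSup_nat
      _ ≤ ff z i := iSup_le fun n => partial_le hz n i
  calc green (giM1 z) i j ≤ ff z i / cc z j :=
        (ENNReal.le_div_iff_mul_le (Or.inl hcj0) (Or.inl hcjt)).mpr hle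
    _ < ∞ := ENNReal.div_lt_top hft hcj0

end Transient


lemma green_eq (P : ℕ → ℕ → ℝ≥0∞) (i j : ℕ) :
    green P i j = (if i = j then 1 else 0) + ∑' l : ℕ, P i l * green P l j := by
  rw [green, tsum_eq_zero_add' ENNReal.summable]
  congr 1
  calc (∑' k : ℕ, matPow P (k+1) i j)
      = ∑' k : ℕ, ∑' l : ℕ, P i l * matPow P k l j := by
        exact tsum_congr fun k => matPow_succ_left P k i j
    _ = ∑' l : ℕ, ∑' k : ℕ, P i l * matPow P k l j := ENNReal.tsum_comm
    _ = ∑' l : ℕ, P i l * green P l j := by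
        exact tsum_congr fun l => by rw [green, ENNReal.tsum_mul_left]


lemma recurrent_case {z : ℝ} (hz : 1 < z) (hz2 : z ≤ 2)
    (hfin : ∀ i j : ℕ, green (giM1 z) i j < ∞) : False := by
  have hz0 : (0:ℝ) < z := by linarith
  have hz1 : z - 1 ≠ 0 := by linarith
  set H : ℕ → ℝ := fun i => (green (giM1 z) i 0).toReal with hH
  have Hnonneg : ∀ i, 0 ≤ H i := fun i => ENNReal.toReal_nonneg
  -- the basic identity
  have base : ∀ i, H i = (if i = 0 then 1 else 0)
      + ∑ l ∈ Finset.range (i+2), Q z i l * H l := by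
    intro i
    have h1 := green_eq (giM1 z) i 0
    rw [giM1_tsum_eq] at h1
    have hne : ∀ l ∈ Finset.range (i+2), giM1 z i l * green (giM1 z) l 0 ≠ ∞ := by
      intro l _
      exact ENNReal.mul_ne_top (by rw [giM1_eq_ofReal]; exact ENNReal.ofReal_ne_top)
        (hfin l 0).ne
    have hifne : (if i = 0 then (1:ℝ≥0∞) else 0) ≠ ∞ := by split <;> simp
    calc H i = (green (giM1 z) i 0).toReal := rfl
      _ = _ := by
        rw [h1, ENNReal.toReal_add hifne (ENNReal.sum_lt_top.mpr
            (fun l hl => (hne l hl).lt_top)).ne, ENNReal.toReal_sum hne]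
        congr 1
        · split <;> simp
        · refine Finset.sum_congr rfl fun l _ => ?_
          rw [ENNReal.toReal_mul, giM1_eq_ofReal, ENNReal.toReal_ofReal (Q_nonneg hz i l)]
  clear_value H
  -- kernel values
  have hQ0 : ∀ i, Q z i 0 = 1 / z ^ (i+1) := fun i => by simp [Q]
  have hQmid : ∀ i l, 1 ≤ l → l ≤ i + 1 → Q z i l = (z-1) / z ^ (i+2-l) := by
    intro i l h1' h2'
    unfold Q
    rw [if_neg (by omega), if_pos h2']
  -- shift relation
  have shift : ∀ i, z * H (i+1) = (H i - (if i = 0 then 1 else 0)) + (z-1) * H (i+2) := by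
    intro i
    have b1 := base (i+1)
    rw [if_neg (by omega), zero_add, Finset.sum_range_succ] at b1
    have htop : Q z (i+1) (i+2) = (z-1) / z := by
      have : Q z (i+1) (i+2) = (z-1) / z ^ (i+1+2-(i+2)) := hQmid (i+1) (i+2) (by omega) (by omega)
      rw [this, show i+1+2-(i+2) = 1 by omega, pow_one]
    have hstep : ∀ l ∈ Finset.range (i+2), Q z (i+1) l * H l = (Q z i l * H l) / z := by
      intro l hl
      have hl' : l < i + 2 := Finset.mem_range.mp hl
      rcases Nat.eq_zero_or_pos l with h0 | h0
      · subst h0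
        rw [hQ0, hQ0, show i+1+1 = (i+1)+1 from rfl, pow_succ]
        ring
      · have e1 : Q z (i+1) l = (z-1) / z ^ (i+3-l) := by
          rw [hQmid (i+1) l h0 (by omega)]
        have e2 : Q z i l = (z-1) / z ^ (i+2-l) := hQmid i l h0 (by omega)
        rw [e1, e2, show i+3-l = (i+2-l)+1 by omega, pow_succ]
        ring
      
    rw [Finset.sum_congr rfl hstep, htop] at b1
    rw [← Finset.sum_div] at b1
    have b0 := base i
    have hs : ∑ l ∈ Finset.range (i+2), Q z i l * H l = H i - (if i = 0 then 1 else 0) := by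
      linarith [base i]
    rw [hs] at b1
    field_simp at b1
    linarith
  -- boundary
  have bd : H 0 - H 1 = z / (z - 1) := by
    have b0 := base 0
    rw [if_pos rfl] at b0
    have : ∑ l ∈ Finset.range 2, Q z 0 l * H l = (1/z) * H 0 + ((z-1)/z) * H 1 := by
      rw [Finset.sum_range_succ, Finset.sum_range_one, hQ0, hQmid 0 1 le_rfl le_rfl]
      norm_num
    rw [this] at b0
    field_simp at b0 ⊢
    linarith
  -- G
  set G : ℕ → ℝ := fun n => H n - (if n = 0 then 1 else 0) with hG
  have hGrec : ∀ n, G (n+1) - G n = -(1/(z-1))^(n+1) := by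
    intro n
    induction n with
    | zero =>
      show H 1 - 0 - (H 0 - 1) = _
      rw [pow_one]
      have h1 : H 1 - 0 - (H 0 - 1) = 1 - z/(z-1) := by linarith [bd]
      rw [h1]
      field_simp
      ring
    | succ n ih =>
      have e1 : G (n+1) = H (n+1) := by simp [hG]
      have e2 : G (n+2) = H (n+2) := by simp [hG]
      have e0 : G n = H n - (if n = 0 then 1 else 0) := rfl
      have key : z * G (n+1) = G n + (z-1) * G (n+2) := by
        rw [e0, e1, e2]; linarith [shift n]
      have deq : (G (n+2) - G (n+1)) * (z-1) = G (n+1) - G n := by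
        linear_combination -key
      rw [pow_succ, mul_one_div, ← neg_div, eq_div_iff hz1]
      linear_combination deq + ih
  clear_value G
  have hmono : ∀ n, G (n+1) ≤ G n - 1 := by
    intro n
    have h1 := hGrec n
    have h2 : (1:ℝ) ≤ (1/(z-1))^(n+1) := by
      apply one_le_pow₀
      rw [le_div_iff₀ (by linarith)]
      linarith
    linarith
  have hlin : ∀ n, G n ≤ G 0 - n := by
    intro n
    induction n with
    | zero => simp
    | succ n ih =>
      have := hmono n
      push_cast
      linarith
  obtain ⟨n, hn⟩ := exists_nat_gt (G 0)
  have h1 := hlin (n+1)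
  have h2 : G (n+1) = H (n+1) := by simp [hG]
  have := Hnonneg (n+1)
  rw [h2] at h1
  push_cast at h1
  linarith


theorem giM1_transient_iff (z : ℝ) (hz : 1 < z) :
    (∀ i j : ℕ, green (giM1 z) i j < ∞) ↔ 2 < z := by
  constructor
  · intro hfin
    by_contra h
    exact recurrent_case hz (not_lt.mp h) hfin
  · intro h2 i j
    exact green_lt_top h2 i j
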